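/- Let d ≥ 3 be an integer and let ζ_d = exp(2πi/d) ∈ ℂ. Then the number field K_d = ℚ(ζ_d − ζ_d⁻¹) is a CM-field: K_d admits no ring homomorphism into ℝ (it is totally imaginary), and there exists a subfield F of K_d that is totally real with [K_d : F] = 2. -/

import Mathlib

open IntermediateField

set_option synthInstance.maxHeartbeats 1000000

/-- `zetaC d` is the primitive `d`-th root of unity `exp(2πi/d)` in `ℂ`. -/
noncomputable def zetaC (d : ℕ) : ℂ := Complex.exp (2 * Real.pi * Complex.I / d)

/-- Auxiliary: any ring hom from a field into `ℂ` extends along an algebraic extension. -/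
theorem exists_extension_to_C {K L : Type*} [Field K] [Field L] [Algebra K L]
    [Algebra.IsAlgebraic K L] (φ : K →+* ℂ) :
    ∃ ψ : L →+* ℂ, ∀ x : K, ψ (algebraMap K L x) = φ x := by
  letI : Algebra K ℂ := φ.toAlgebra
  haveI : NoZeroSMulDivisors K L :=
    inferInstance
  haveI : NoZeroSMulDivisors K ℂ :=
    inferInstance
  let τ : L →ₐ[K] ℂ := IsAlgClosed.lift
  exact ⟨τ.toRingHom, fun x => τ.commutes x⟩

set_option maxHeartbeats 1000000 in
/-- For `d ≥ 3`, the field `K_d = ℚ(ζ_d - ζ_d⁻¹)` is a CM-field: it is totally imaginary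
(no ring homomorphism into `ℝ`), and it is a quadratic extension of a totally real
subfield `F`. -/
theorem stmt0 (d : ℕ) (hd : 3 ≤ d) (K : IntermediateField ℚ ℂ)
    (hK : K = ℚ⟮zetaC d - (zetaC d)⁻¹⟯) :
    IsEmpty (K →+* ℝ) ∧
    ∃ F : Subfield K,
      (∀ σ : F →+* ℂ, ∀ x : F, (σ x).im = 0) ∧
      Module.finrank F K = 2 := by
  subst hK
  have hd0 : d ≠ 0 := by omega
  set ζ : ℂ := zetaC d with hζdef
  set α : ℂ := ζ - ζ⁻¹ with hαdef
  have hζ : IsPrimitiveRoot ζ d := Complex.isPrimitiveRoot_exp d hd0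
  have hζd : ζ ^ d = 1 := hζ.pow_eq_one
  have habs : ‖ζ‖ = 1 := Complex.norm_eq_one_of_pow_eq_one hζd hd0
  have hζim : ζ.im = Real.sin (2 * Real.pi / d) := by
    rw [hζdef, zetaC, show 2 * Real.pi * Complex.I / d
        = ((2 * Real.pi / d : ℝ) : ℂ) * Complex.I by push_cast; ring]
    exact Complex.exp_ofReal_mul_I_im _
  have hsin : 0 < Real.sin (2 * Real.pi / d) := by
    apply Real.sin_pos_of_pos_of_lt_pi
    · have : (0:ℝ) < d := by positivity
      positivity
    · rw [div_lt_iff₀ (by positivity)]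
      have h3 : (3:ℝ) ≤ d := by exact_mod_cast hd
      nlinarith [Real.pi_pos]
  have hαim : α.im = 2 * Real.sin (2 * Real.pi / d) := by
    rw [hαdef, Complex.inv_eq_conj habs]
    simp [Complex.sub_im, Complex.conj_im, hζim]
    ring
  have hαre : α.re = 0 := by
    rw [hαdef, Complex.inv_eq_conj habs]
    simp
  have hα0 : α ≠ 0 := by
    intro h
    rw [h] at hαim
    simp at hαim
    nlinarith
  -- integrality facts
  have hζint : IsIntegral ℚ ζ :=
    ⟨Polynomial.X ^ d - Polynomial.C 1, Polynomial.monic_X_pow_sub_C 1 hd0, by simp [hζd]⟩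
  have hζinv : ζ⁻¹ = ζ ^ (d - 1) := by
    have hζ0 : ζ ≠ 0 := fun h => by simp [h, zero_pow hd0] at hζd
    field_simp
    rw [← pow_succ']
    have h1 : d - 1 + 1 = d := by omega
    rw [h1, hζd]
  have hαint : IsIntegral ℚ α := by
    rw [hαdef, hζinv]
    exact hζint.sub (hζint.pow _)
  set K' : IntermediateField ℚ ℂ := ℚ⟮α⟯ with hK'def
  have hαK : α ∈ K' := mem_adjoin_simple_self ℚ α
  set β : K' := ⟨α, hαK⟩ with hβdef
  have hβ0 : β ≠ 0 := fun h => hα0 (congrArg Subtype.val h)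
  set C' : IntermediateField ℚ ℂ := ℚ⟮ζ⟯ with hC'def
  have hζC : ζ ∈ C' := mem_adjoin_simple_self ℚ ζ
  have hKC : K' ≤ C' := adjoin_simple_le_iff.mpr (sub_mem hζC (inv_mem hζC))
  haveI : FiniteDimensional ℚ C' := IntermediateField.adjoin.finiteDimensional hζint
  haveI : FiniteDimensional ℚ K' := IntermediateField.adjoin.finiteDimensional hαint
  -- key: every embedding of K' into ℂ sends β to a purely imaginary number
  have key : ∀ φ : K' →+* ℂ, (φ β).re = 0 := by
    intro φ
    letI : Algebra K' C' := (IntermediateField.inclusion hKC).toRingHom.toAlgebra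
    haveI : IsScalarTower ℚ K' C' := IsScalarTower.of_algebraMap_eq' (Subsingleton.elim _ _)
    haveI : Algebra.IsAlgebraic K' C' :=
      ⟨fun c => (IsIntegral.tower_top (IsIntegral.of_finite ℚ c)).isAlgebraic⟩
    obtain ⟨ψ, hψ⟩ := exists_extension_to_C (L := C') φ
    set w : ℂ := ψ ⟨ζ, hζC⟩ with hw
    have hwd : w ^ d = 1 := by
      rw [hw, ← map_pow]
      have h1 : (⟨ζ, hζC⟩ : C') ^ d = 1 := by
        ext
        push_cast
        exact hζd
      rw [h1, map_one]
    have habsw : ‖w‖ = 1 := Complex.norm_eq_one_of_pow_eq_one hwd hd0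
    have hres : φ β = w - w⁻¹ := by
      have h1 : algebraMap K' C' β = ⟨ζ, hζC⟩ - (⟨ζ, hζC⟩ : C')⁻¹ := by
        ext
        push_cast
        rfl
      have h2 : φ β = ψ (algebraMap K' C' β) := (hψ β).symm
      rw [h2, h1, map_sub, map_inv₀]
    rw [hres, Complex.inv_eq_conj habsw]
    simp [Complex.sub_re]
  set γ : K' := β ^ 2 with hγdef
  -- every embedding of K' into ℂ is real on ℚ⟮γ⟯
  have key2 : ∀ φ : K' →+* ℂ, ∀ x : K', x ∈ ℚ⟮γ⟯ → (φ x).im = 0 := by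
    intro φ
    have hmem : ∀ q : ℚ, algebraMap ℚ K' q ∈ Subfield.comap φ Complex.ofRealHom.fieldRange := by
      intro q
      rw [Subfield.mem_comap, RingHom.mem_fieldRange]
      refine ⟨q, ?_⟩
      have : algebraMap ℚ K' q = (q : K') := by
        simp [eq_ratCast]
      rw [this, map_ratCast]
      simp
    set T : IntermediateField ℚ K' :=
      Subfield.toIntermediateField (Subfield.comap φ Complex.ofRealHom.fieldRange) hmem with hT
    have hTmem : ∀ z : K', z ∈ T ↔ (φ z).im = 0 := by
      intro z
      constructor
      · rintro ⟨r, hr⟩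
        rw [← hr]
        simp
      · intro h
        exact ⟨(φ z).re, Complex.ext (by simp) (by simp [h])⟩
    intro x hx
    refine (hTmem x).mp (adjoin_simple_le_iff.mpr ?_ hx)
    rw [hTmem]
    rw [hγdef, map_pow, sq, Complex.mul_im, key φ]
    ring
  constructor
  · refine ⟨fun σ => ?_⟩
    have h1 := key (Complex.ofRealHom.comp σ)
    have h2 : ((Complex.ofRealHom.comp σ) β).im = 0 := by simp
    have h3 : (Complex.ofRealHom.comp σ) β = 0 := Complex.ext h1 h2
    exact hβ0 ((map_eq_zero _).mp h3)
  · set E : IntermediateField ℚ K' := ℚ⟮γ⟯ with hEdef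
    refine ⟨E.toSubfield, fun σ x => ?_, ?_⟩
    · haveI : Algebra.IsAlgebraic E.toSubfield K' :=
        ⟨fun c => (IsIntegral.tower_top (IsIntegral.of_finite ℚ c)).isAlgebraic⟩
      obtain ⟨ψ, hψ⟩ := exists_extension_to_C (L := K') σ
      have h1 : σ x = ψ (algebraMap E.toSubfield K' x) := (hψ x).symm
      have h2 : algebraMap E.toSubfield K' x = (x : K') := rfl
      rw [h1, h2]
      exact key2 ψ (x : K') x.2
    · show Module.finrank ↥E ↥K' = 2
      have hβint : IsIntegral ↥E β := IsIntegral.tower_top (IsIntegral.of_finite ℚ β)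
      have htop0 : adjoin ℚ {β} = (⊤ : IntermediateField ℚ K') := by
        apply IntermediateField.map_injective K'.val
        change IntermediateField.lift _ = IntermediateField.lift _
        erw [
          IntermediateField.lift_adjoin_simple, IntermediateField.lift_top]
      have htop : adjoin ↥E {β} = (⊤ : IntermediateField ↥E ↥K') :=
        IntermediateField.adjoin_eq_top_of_adjoin_eq_top ℚ htop0
      have h2 : Module.finrank ↥E ↥K' = (minpoly ↥E β).natDegree := by
        rw [← IntermediateField.finrank_top', ← htop, IntermediateField.adjoin.finrank hβint]
      rw [h2]
      set γE : ↥E := ⟨γ, mem_adjoin_simple_self ℚ γ⟩ with hγE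
      have hmon : (Polynomial.X ^ 2 - Polynomial.C γE).Monic :=
        Polynomial.monic_X_pow_sub_C γE two_ne_zero
      have haev : Polynomial.aeval β (Polynomial.X ^ 2 - Polynomial.C γE) = 0 := by
        rw [map_sub, Polynomial.aeval_X_pow, Polynomial.aeval_C]
        have : algebraMap ↥E ↥K' γE = γ := rfl
        rw [this, hγdef]
        ring
      have hdvd := minpoly.dvd ↥E β haev
      have hle : (minpoly ↥E β).natDegree ≤ 2 := by
        have := Polynomial.natDegree_le_of_dvd hdvd hmon.ne_zero
        rwa [Polynomial.natDegree_X_pow_sub_C] at this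
      have hge : 2 ≤ (minpoly ↥E β).natDegree := by
        rw [minpoly.two_le_natDegree_iff hβint]
        rintro ⟨y, hy⟩
        have hβmem : β ∈ E := by
          rw [← hy]
          exact y.2
        have him := key2 K'.val.toRingHom β hβmem
        have : (K'.val.toRingHom β) = α := rfl
        rw [this, hαim] at him
        nlinarith
      omega
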